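/- Let Γ be an N × n real matrix with columns x_{·1},...,x_{·n}. Suppose ‖x_{·1}‖₂ ≤ √N and the Euclidean ball √N · B₂ᴺ is contained in the absolutely convex hull of {x_{·k} : k ≠ 1}. Then there exists w ∈ ℝⁿ supported on {2,...,n} with ‖w‖₁ ≤ 1 and Γ·e₁ = Γ·w, where e₁ is the first standard basis vector; consequently Γ does not satisfy exact reconstruction of order 1. -/

import Mathlib

/-- If the first column of `Γ` has Euclidean norm at most `√N` and `√N·B₂ᴺ` is contained in
the absolutely convex hull of the remaining columns, then `Γ·e₁` can be written as `Γ·w` for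
some `w` supported on `{2,…,n}` with `‖w‖₁ ≤ 1`; consequently `Γ` does not satisfy exact
reconstruction of order 1. -/
theorem stmt4 {N n : ℕ} (hn : 0 < n) (Γ : Matrix (Fin N) (Fin n) ℝ)
    (col : Fin n → EuclideanSpace ℝ (Fin N))
    (hcol : ∀ k i, col k i = Γ i k)
    (h1 : ‖col ⟨0, hn⟩‖ ≤ Real.sqrt N)
    (h2 : Metric.closedBall (0 : EuclideanSpace ℝ (Fin N)) (Real.sqrt N) ⊆
      convexHull ℝ ((col '' {k | k ≠ ⟨0, hn⟩}) ∪ (-(col '' {k | k ≠ ⟨0, hn⟩})))) :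
    (∃ w : Fin n → ℝ, (∀ j, w j ≠ 0 → j ≠ ⟨0, hn⟩) ∧ (∑ j, |w j|) ≤ 1 ∧
        Γ.mulVec (Pi.single ⟨0, hn⟩ 1) = Γ.mulVec w) ∧
      ¬ (∀ v : Fin n → ℝ, (Function.support v).ncard ≤ 1 →
          ∀ t : Fin n → ℝ, Γ.mulVec t = Γ.mulVec v → (∑ j, |t j|) ≤ (∑ j, |v j|) → t = v) := by
  classical
  set z0 : Fin n := ⟨0, hn⟩
  have hmem : col z0 ∈ convexHull ℝ ((col '' {k | k ≠ z0}) ∪ (-(col '' {k | k ≠ z0}))) :=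
    h2 (Metric.mem_closedBall.2 (by simpa using h1))
  rw [convexHull_eq] at hmem
  obtain ⟨ι, t, c, z, hc0, hc1, hzS, hcm⟩ := hmem
  rw [Finset.centerMass_eq_of_sum_1 _ _ hc1] at hcm
  -- extract for each i a column index and a sign
  have hex : ∀ i : ι, ∃ (k : Fin n) (e : ℝ), i ∈ t →
      k ≠ z0 ∧ |e| = 1 ∧ z i = e • col k := by
    intro i
    by_cases hi : i ∈ t
    · rcases hzS i hi with h | h
      · obtain ⟨k, hk, hke⟩ := h
        exact ⟨k, 1, fun _ => ⟨hk, by norm_num, by simp [hke.symm]⟩⟩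
      · rw [Set.mem_neg] at h
        obtain ⟨k, hk, hke⟩ := h
        refine ⟨k, -1, fun _ => ⟨hk, by norm_num, ?_⟩⟩
        rw [hke]; simp
    · exact ⟨z0, 1, fun h => absurd h hi⟩
  choose f e hfe using hex
  set w : Fin n → ℝ := fun j => ∑ i ∈ t, if f i = j then c i * e i else 0 with hw
  have hw0 : ∀ j, w j ≠ 0 → j ≠ z0 := by
    intro j hj
    by_contra h
    subst h
    apply hj
    simp only [hw]
    refine Finset.sum_eq_zero fun i hi => ?_
    have := (hfe i hi).1
    simp [this]
  have hwl1 : (∑ j, |w j|) ≤ 1 := by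
    calc (∑ j, |w j|) ≤ ∑ j, ∑ i ∈ t, |if f i = j then c i * e i else 0| := by
          refine Finset.sum_le_sum fun j _ => Finset.abs_sum_le_sum_abs _ _
      _ = ∑ i ∈ t, ∑ j, |if f i = j then c i * e i else 0| := Finset.sum_comm
      _ = ∑ i ∈ t, c i := by
          refine Finset.sum_congr rfl fun i hi => ?_
          rw [Finset.sum_eq_single (f i)]
          · simp [abs_mul, (hfe i hi).2.1, abs_of_nonneg (hc0 i hi)]
          · intro j _ hj; simp [Ne.symm hj]
          · simp
      _ = 1 := hc1
  have hmv : Γ.mulVec (Pi.single z0 1) = Γ.mulVec w := by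
    funext i0
    have hcoord : ∑ i ∈ t, c i * z i i0 = col z0 i0 := by
      have := congrArg (fun v : EuclideanSpace ℝ (Fin N) => v i0) hcm
      simp only [WithLp.ofLp_sum, Finset.sum_apply] at this
      simpa only [PiLp.smul_apply, smul_eq_mul] using this
    have h1' : Γ.mulVec (Pi.single z0 1) i0 = Γ i0 z0 := by
      simp [Matrix.mulVec_single]
    rw [h1', ← hcol]
    rw [← hcoord]
    simp only [Matrix.mulVec, dotProduct, hw, Finset.mul_sum]
    rw [Finset.sum_comm]
    refine Finset.sum_congr rfl fun i hi => ?_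
    rw [Finset.sum_eq_single (f i)]
    · rw [if_pos rfl, (hfe i hi).2.2]
      simp only [PiLp.smul_apply, smul_eq_mul, hcol]
      ring
    · intro j _ hj; simp [Ne.symm hj]
    · simp
  refine ⟨⟨w, hw0, hwl1, hmv⟩, ?_⟩
  intro h
  have hsupp : (Function.support (Pi.single z0 1 : Fin n → ℝ)).ncard ≤ 1 := by
    have : Function.support (Pi.single z0 1 : Fin n → ℝ) ⊆ {z0} := by
      intro j hj
      simp only [Function.mem_support] at hj
      by_contra hne
      exact hj (Pi.single_eq_of_ne (by simpa using hne) 1)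
    calc (Function.support (Pi.single z0 1 : Fin n → ℝ)).ncard ≤ ({z0} : Set (Fin n)).ncard :=
          Set.ncard_le_ncard this (Set.finite_singleton _)
      _ = 1 := Set.ncard_singleton _
  have hv1 : (∑ j, |(Pi.single z0 1 : Fin n → ℝ) j|) = 1 := by
    rw [Finset.sum_eq_single z0] <;> simp_all
  have := h (Pi.single z0 1) hsupp w hmv.symm (by rw [hv1]; exact hwl1)
  have hw00 : w z0 = 0 := by
    by_contra hne
    exact (hw0 z0 hne) rfl
  have : (1 : ℝ) = 0 := by
    have h0 := congrFun this z0
    simp [hw00] at h0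
  norm_num at this
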